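/- Let K be a field, E an n-dimensional K-vector space, and r ∈ ℕ with 1 ≤ r < n. Set d = n² − r² and assume d² + n²d ≤ n⁴. Then there exist subspaces L and M of E⊗E with dim L = dim M = d such that (L ⊗ L) ∩ (E ⊗ M ⊗ E) = {0} in E^{⊗4}. -/

import Mathlib

open TensorProduct

namespace GS

variable (K : Type*) [Field K] (V : Type*) [AddCommGroup V] [Module K V]

/-- The tensor product of two subspaces, as a subspace of the tensor product. -/
noncomputable def tsub {M N : Type*} [AddCommGroup M] [Module K M] [AddCommGroup N] [Module K N]
    (A : Submodule K M) (B : Submodule K N) : Submodule K (M ⊗[K] N) :=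
  LinearMap.range (TensorProduct.map A.subtype B.subtype)

/-- `V ≃ V^{⊗1}`. -/
noncomputable def pow1 : V ≃ₗ[K] ⨂[K]^1 V :=
  (PiTensorProduct.subsingletonEquiv (s := fun _ => V) (0 : Fin 1)).symm

/-- `V ⊗ V ≃ V^{⊗2}`. -/
noncomputable def pow2 : (V ⊗[K] V) ≃ₗ[K] ⨂[K]^2 V :=
  (TensorProduct.congr (pow1 K V) (pow1 K V)).trans
    ((TensorPower.mulEquiv (n := 1) (m := 1)).trans (TensorPower.cast K V (by norm_num)))

/-- The subspace `V^{⊗a} ⊗ L ⊗ V^{⊗b}` of `V^{⊗(a+(2+b))}`. -/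
noncomputable def segAux (a b : ℕ) (L : Submodule K (V ⊗[K] V)) :
    Submodule K (⨂[K]^(a + (2 + b)) V) :=
  Submodule.map (TensorPower.mulEquiv (R := K) (M := V) (n := a) (m := 2 + b)).toLinearMap
    (tsub K (⊤ : Submodule K (⨂[K]^a V))
      (Submodule.map (TensorPower.mulEquiv (R := K) (M := V) (n := 2) (m := b)).toLinearMap
        (tsub K (L.map (pow2 K V : (V ⊗[K] V) →ₗ[K] ⨂[K]^2 V)) (⊤ : Submodule K (⨂[K]^b V)))))

/-- For `j : Fin (q-1)`, the subspace `V^{⊗j} ⊗ L ⊗ V^{⊗(q-2-j)}` of `V^{⊗q}`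
(the `(j+1)`-st shift of `L`). -/
noncomputable def shiftSub (q : ℕ) (L : Submodule K (V ⊗[K] V)) (j : Fin (q - 1)) :
    Submodule K (⨂[K]^q V) :=
  Submodule.map (TensorPower.cast K V (by have := j.2; omega : (j : ℕ) + (2 + (q - 2 - j)) = q)).toLinearMap
    (segAux K V j (q - 2 - j) L)

/-- `E_q(L,V) = ⋂_{j=1}^{q-1} V^{⊗(j-1)} ⊗ L ⊗ V^{⊗(q-1-j)} ⊆ V^{⊗q}`. -/
noncomputable def Eint (q : ℕ) (L : Submodule K (V ⊗[K] V)) : Submodule K (⨂[K]^q V) :=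
  ⨅ j : Fin (q - 1), shiftSub K V q L j

/-- The degree-`q` component of the two-sided ideal generated by the subspace
`M ⊆ V ⊗ V` of quadratic relations: the sum of all shifts `V^{⊗(j-1)} ⊗ M ⊗ V^{⊗(q-1-j)}`. -/
noncomputable def idealComp (q : ℕ) (M : Submodule K (V ⊗[K] V)) : Submodule K (⨂[K]^q V) :=
  ⨆ j : Fin (q - 1), shiftSub K V q M j

/-- The dimension of the degree-`q` component of the quadratic algebra with space of
relations `M ⊆ V ⊗ V` (the quotient of `V^{⊗q}` by the degree-`q` component of the ideal). -/
noncomputable def quadDim (q : ℕ) (M : Submodule K (V ⊗[K] V)) : ℕ :=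
  Module.finrank K ((⨂[K]^q V) ⧸ idealComp K V q M)

/-- `h_q(K,n,d)`: the minimal dimension of the `q`-th graded component over all quadratic
`K`-algebras with `n` generators and `d` (linearly independent) quadratic relations. -/
noncomputable def hq (n d q : ℕ) : ℕ :=
  sInf { h | ∃ M : Submodule K ((Fin n → K) ⊗[K] (Fin n → K)),
      Module.finrank K M = d ∧ quadDim K (Fin n → K) q M = h }

end GS

namespace GS

variable (K : Type*) [Field K] (V : Type*) [AddCommGroup V] [Module K V]

/-- The canonical equivalence `(V ⊗ V) ⊗ (V ⊗ V) ≃ V^{⊗4}`. -/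
noncomputable def pow4 : ((V ⊗[K] V) ⊗[K] (V ⊗[K] V)) ≃ₗ[K] ⨂[K]^4 V :=
  (TensorProduct.congr (pow2 K V) (pow2 K V)).trans
    ((TensorPower.mulEquiv (n := 2) (m := 2)).trans (TensorPower.cast K V (by norm_num)))

/-- The subspace `L ⊗ N` of `V^{⊗4}` for subspaces `L, N ⊆ V ⊗ V`. -/
noncomputable def tsub4 (L N : Submodule K (V ⊗[K] V)) : Submodule K (⨂[K]^4 V) :=
  Submodule.map (pow4 K V : ((V ⊗[K] V) ⊗[K] (V ⊗[K] V)) →ₗ[K] ⨂[K]^4 V) (tsub K L N)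

/-- The subspace `V ⊗ M ⊗ V` of `V^{⊗4}` for a subspace `M ⊆ V ⊗ V`. -/
noncomputable def midSub4 (M : Submodule K (V ⊗[K] V)) : Submodule K (⨂[K]^4 V) :=
  Submodule.map (TensorPower.cast K V (by norm_num : 1 + (2 + 1) = 4)).toLinearMap (segAux K V 1 1 M)

end GS


namespace GSProof

open TensorProduct PiTensorProduct Module GS

variable {K : Type*} [Field K] {V : Type*} [AddCommGroup V] [Module K V]

lemma pow1_apply (e : V) : pow1 K V e = tprod K (fun _ : Fin 1 => e) := by
  rw [pow1, LinearEquiv.symm_apply_eq, PiTensorProduct.subsingletonEquiv_apply_tprod]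

lemma mulEquiv_tprod {n m : ℕ} (a : Fin n → V) (b : Fin m → V) :
    TensorPower.mulEquiv (R := K) (tprod K a ⊗ₜ tprod K b) = tprod K (Fin.append a b) := by
  rw [← TensorPower.gMul_def, TensorPower.tprod_mul_tprod]

lemma pow2_tmul (x y : V) :
    pow2 K V (x ⊗ₜ y) = tprod K (fun i : Fin 2 => ![x, y] i) := by
  simp only [pow2, LinearEquiv.trans_apply, TensorProduct.congr_tmul, pow1_apply,
    mulEquiv_tprod, TensorPower.cast_tprod]
  congr 1
  funext i
  fin_cases i <;> simp [Fin.append, Fin.addCases, Fin.cast]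

lemma pow4_tmul (a b c d : V) :
    pow4 K V ((a ⊗ₜ b) ⊗ₜ (c ⊗ₜ d)) = tprod K (fun i : Fin 4 => ![a, b, c, d] i) := by
  simp only [pow4, LinearEquiv.trans_apply, TensorProduct.congr_tmul, pow2_tmul,
    mulEquiv_tprod, TensorPower.cast_tprod]
  congr 1
  funext i
  fin_cases i <;> simp [Fin.append, Fin.addCases, Fin.cast, Fin.castLT, Fin.subNat] <;> rfl

lemma mid_key (e₁ u v e₂ : V) :
    TensorPower.cast K V (by norm_num : 1 + (2 + 1) = 4)
      (TensorPower.mulEquiv (pow1 K V e₁ ⊗ₜ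
        TensorPower.mulEquiv (pow2 K V (u ⊗ₜ v) ⊗ₜ pow1 K V e₂))) =
    pow4 K V ((e₁ ⊗ₜ u) ⊗ₜ (v ⊗ₜ e₂)) := by
  rw [pow4_tmul]
  simp only [pow1_apply, pow2_tmul, mulEquiv_tprod, TensorPower.cast_tprod]
  congr 1
  funext i
  fin_cases i <;>
    simp [Fin.append, Fin.addCases, Fin.cast, Fin.subNat, Fin.castLT, Fin.castPred] <;> rfl

lemma exists_avoiding [FiniteDimensional K V] (d : ℕ) (X₁ X₂ : Submodule K V)
    (h1 : d + finrank K X₁ ≤ finrank K V) (h2 : d + finrank K X₂ ≤ finrank K V) :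
    ∃ L : Submodule K V, finrank K L = d ∧ L ⊓ X₁ = ⊥ ∧ L ⊓ X₂ = ⊥ := by
  induction d with
  | zero => exact ⟨⊥, finrank_bot K V, bot_inf_eq _, bot_inf_eq _⟩
  | succ d ih =>
    obtain ⟨L, hL, hL1, hL2⟩ := ih (by omega) (by omega)
    have hsup : ∀ X : Submodule K V, L ⊓ X = ⊥ → d + 1 + finrank K X ≤ finrank K V →
        L ⊔ X ≠ ⊤ := by
      intro X hLX hX h
      have h3 := Submodule.finrank_sup_add_finrank_inf_eq L X
      rw [hLX, h] at h3
      rw [finrank_bot, finrank_top] at h3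
      omega
    have hY1 : L ⊔ X₁ ≠ ⊤ := hsup X₁ hL1 h1
    have hY2 : L ⊔ X₂ ≠ ⊤ := hsup X₂ hL2 h2
    have hex : ∀ Y : Submodule K V, Y ≠ ⊤ → ∃ v, v ∉ Y := by
      intro Y hY
      by_contra h
      push_neg at h
      exact hY (Submodule.eq_top_iff'.2 fun x => h x)
    obtain ⟨a, ha⟩ := hex _ hY1
    obtain ⟨b, hb⟩ := hex _ hY2
    have hv : ∃ v, v ∉ L ⊔ X₁ ∧ v ∉ L ⊔ X₂ := by
      by_cases ha2 : a ∉ L ⊔ X₂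
      · exact ⟨a, ha, ha2⟩
      by_cases hb1 : b ∉ L ⊔ X₁
      · exact ⟨b, hb1, hb⟩
      push_neg at ha2 hb1
      refine ⟨a + b, fun h => ha ?_, fun h => hb ?_⟩
      · have := Submodule.sub_mem _ h hb1; simpa using this
      · have := Submodule.sub_mem _ h ha2; simpa [add_sub_cancel_left] using this
    obtain ⟨v, hv1, hv2⟩ := hv
    have hvL : v ∉ L := fun h => hv1 (Submodule.mem_sup_left h)
    have hv0 : v ≠ 0 := fun h => hv1 (h ▸ Submodule.zero_mem _)
    refine ⟨L ⊔ K ∙ v, ?_, ?_, ?_⟩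
    · have hdisj : L ⊓ (K ∙ v) = ⊥ := by
        rw [eq_bot_iff]
        intro x hx
        obtain ⟨hxL, hxv⟩ := Submodule.mem_inf.mp hx
        rw [Submodule.mem_span_singleton] at hxv
        obtain ⟨c, rfl⟩ := hxv
        rcases eq_or_ne c 0 with rfl | hc
        · simp
        · exact absurd (by simpa [smul_smul, inv_mul_cancel₀ hc] using
            Submodule.smul_mem L c⁻¹ hxL) hvL
      have h3 := Submodule.finrank_sup_add_finrank_inf_eq L (K ∙ v)
      rw [hdisj, finrank_bot, finrank_span_singleton hv0, hL] at h3
      omega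
    · rw [eq_bot_iff]
      intro x hmem
      obtain ⟨hx, hxX⟩ := Submodule.mem_inf.mp hmem
      obtain ⟨l, hl, z, hz, rfl⟩ := Submodule.mem_sup.mp hx
      rw [Submodule.mem_span_singleton] at hz
      obtain ⟨c, rfl⟩ := hz
      rcases eq_or_ne c 0 with rfl | hc
      · rw [zero_smul, add_zero] at hxX ⊢
        exact hL1 ▸ Submodule.mem_inf.mpr ⟨hl, hxX⟩
      · exfalso
        apply hv1
        have heq : c • v = (l + c • v) - l := by abel
        have hcv : c • v ∈ L ⊔ X₁ := by
          rw [heq]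
          exact Submodule.sub_mem _ (Submodule.mem_sup_right hxX) (Submodule.mem_sup_left hl)
        simpa [smul_smul, inv_mul_cancel₀ hc] using Submodule.smul_mem (L ⊔ X₁) c⁻¹ hcv
    · rw [eq_bot_iff]
      intro x hmem
      obtain ⟨hx, hxX⟩ := Submodule.mem_inf.mp hmem
      obtain ⟨l, hl, z, hz, rfl⟩ := Submodule.mem_sup.mp hx
      rw [Submodule.mem_span_singleton] at hz
      obtain ⟨c, rfl⟩ := hz
      rcases eq_or_ne c 0 with rfl | hc
      · rw [zero_smul, add_zero] at hxX ⊢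
        exact hL2 ▸ Submodule.mem_inf.mpr ⟨hl, hxX⟩
      · exfalso
        apply hv2
        have heq : c • v = (l + c • v) - l := by abel
        have hcv : c • v ∈ L ⊔ X₂ := by
          rw [heq]
          exact Submodule.sub_mem _ (Submodule.mem_sup_right hxX) (Submodule.mem_sup_left hl)
        simpa [smul_smul, inv_mul_cancel₀ hc] using Submodule.smul_mem (L ⊔ X₂) c⁻¹ hcv

lemma injective_comp_subtype (F : Type*) [AddCommGroup F] [Module K F]
    (p : V →ₗ[K] F) (L : Submodule K V) (h : L ⊓ LinearMap.ker p = ⊥) :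
    Function.Injective (p ∘ₗ L.subtype) := by
  rw [← LinearMap.ker_eq_bot, LinearMap.ker_comp, eq_bot_iff]
  intro x hx
  have hm : (x : V) ∈ L ⊓ LinearMap.ker p := ⟨x.2, by simpa using hx⟩
  rw [h] at hm
  simpa [Submodule.mem_bot] using Subtype.ext (by simpa using hm)

lemma map_injective {A B C D : Type*} [AddCommGroup A] [Module K A] [AddCommGroup B]
    [Module K B] [AddCommGroup C] [Module K C] [AddCommGroup D] [Module K D]
    (f : A →ₗ[K] C) (g : B →ₗ[K] D) (hf : Function.Injective f) (hg : Function.Injective g) :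
    Function.Injective (TensorProduct.map f g) := by
  rw [← LinearMap.lTensor_comp_rTensor]
  exact (Module.Flat.lTensor_preserves_injective_linearMap g hg).comp
    (Module.Flat.rTensor_preserves_injective_linearMap f hf)


noncomputable def Theta {K : Type*} [Field K] {E F : Type*} [AddCommGroup E] [Module K E]
    [AddCommGroup F] [Module K F] (p : E →ₗ[K] F) :
    ((E ⊗[K] E) ⊗[K] (E ⊗[K] E)) →ₗ[K] ((E ⊗[K] F) ⊗[K] (F ⊗[K] E)) :=
  TensorProduct.map (LinearMap.lTensor E p) (LinearMap.rTensor E p)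

noncomputable def Psi {K : Type*} [Field K] {E F : Type*} [AddCommGroup E] [Module K E]
    [AddCommGroup F] [Module K F] (p : E →ₗ[K] F) :
    (⨂[K]^4 E) →ₗ[K] ((E ⊗[K] F) ⊗[K] (F ⊗[K] E)) :=
  Theta p ∘ₗ
    ((GS.pow4 K E).symm : (⨂[K]^4 E) ≃ₗ[K] (E ⊗[K] E) ⊗[K] (E ⊗[K] E)).toLinearMap

lemma Psi_pow4 {K : Type*} [Field K] {E F : Type*} [AddCommGroup E] [Module K E]
    [AddCommGroup F] [Module K F] (p : E →ₗ[K] F) (y : (E ⊗[K] E) ⊗[K] (E ⊗[K] E)) :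
    Psi p (GS.pow4 K E y) = Theta p y := by
  simp only [Psi, LinearMap.comp_apply, LinearEquiv.coe_coe, LinearEquiv.symm_apply_apply]

set_option maxHeartbeats 1000000 in
lemma Psi_key {K : Type*} [Field K] {E F : Type*} [AddCommGroup E] [Module K E]
    [AddCommGroup F] [Module K F] (p : E →ₗ[K] F) (e₁ e₂ : E) (m : E ⊗[K] E) :
    Psi p (TensorPower.cast K E (by norm_num : 1 + (2 + 1) = 4)
        (TensorPower.mulEquiv (GS.pow1 K E e₁ ⊗ₜ
          TensorPower.mulEquiv (GS.pow2 K E m ⊗ₜ GS.pow1 K E e₂)))) =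
      (TensorProduct.map (TensorProduct.mk K E F e₁)
          ((TensorProduct.mk K F E).flip e₂))
        (TensorProduct.map p p m) := by
  induction m using TensorProduct.induction_on with
  | zero => simp only [map_zero, TensorProduct.zero_tmul, TensorProduct.tmul_zero]
  | tmul u v =>
      rw [mid_key, Psi_pow4, Theta]
      simp only [TensorProduct.map_tmul, LinearMap.lTensor_tmul, LinearMap.rTensor_tmul,
        TensorProduct.mk_apply, LinearMap.flip_apply]
  | add x y hx hy =>
      simp only [map_add, TensorProduct.add_tmul, TensorProduct.tmul_add] at hx hy ⊢
      rw [hx, hy]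

set_option maxHeartbeats 1000000 in
lemma Psi_midSub4 {K : Type*} [Field K] {E F : Type*} [AddCommGroup E] [Module K E]
    [AddCommGroup F] [Module K F] (p : E →ₗ[K] F) :
    ∀ x ∈ GS.midSub4 K E (LinearMap.ker (TensorProduct.map p p)), Psi p x = 0 := by
  intro x hx
  rw [GS.midSub4, Submodule.mem_map] at hx
  obtain ⟨y, hy, rfl⟩ := hx
  rw [GS.segAux, Submodule.mem_map] at hy
  obtain ⟨z, hz, rfl⟩ := hy
  rw [GS.tsub, LinearMap.mem_range] at hz
  obtain ⟨t, rfl⟩ := hz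
  induction t using TensorProduct.induction_on with
  | zero => simp only [map_zero]
  | add t₁ t₂ ht₁ ht₂ => simp only [map_add, ht₁, ht₂, add_zero]
  | tmul a c =>
      simp only [TensorProduct.map_tmul, Submodule.coe_subtype]
      obtain ⟨w, hw, hcw⟩ := Submodule.mem_map.mp c.2
      rw [← hcw]
      rw [GS.tsub, LinearMap.mem_range] at hw
      obtain ⟨s, rfl⟩ := hw
      clear hcw
      induction s using TensorProduct.induction_on with
      | zero => simp only [map_zero, TensorProduct.tmul_zero]
      | add s₁ s₂ hs₁ hs₂ =>
          simp only [map_add, TensorProduct.tmul_add] at hs₁ hs₂ ⊢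
          rw [hs₁, hs₂, add_zero]
      | tmul m' c₂ =>
          simp only [TensorProduct.map_tmul, Submodule.coe_subtype]
          obtain ⟨m, hm, hmm⟩ := Submodule.mem_map.mp m'.2
          rw [← hmm,
            ← LinearEquiv.apply_symm_apply (GS.pow1 K E) (a : ⨂[K]^1 E),
            ← LinearEquiv.apply_symm_apply (GS.pow1 K E) (c₂ : ⨂[K]^1 E)]
          simp only [LinearEquiv.coe_coe]
          rw [Psi_key]
          have hm0 : TensorProduct.map p p m = 0 := hm
          rw [hm0, map_zero]

set_option maxHeartbeats 1000000 in
theorem main (K : Type*) [Field K] (E : Type*) [AddCommGroup E] [Module K E]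
    (n r : ℕ) (hE : Module.finrank K E = n) (hr1 : 1 ≤ r) (hrn : r < n)
    (hd : (n ^ 2 - r ^ 2) ^ 2 + n ^ 2 * (n ^ 2 - r ^ 2) ≤ n ^ 4) :
    ∃ L M : Submodule K (E ⊗[K] E),
      Module.finrank K L = n ^ 2 - r ^ 2 ∧ Module.finrank K M = n ^ 2 - r ^ 2 ∧
      GS.tsub4 K E L L ⊓ GS.midSub4 K E M = ⊥ := by
  classical
  haveI : Module.Finite K E := Module.finite_of_finrank_pos (by omega : 0 < finrank K E)
  -- the surjection p : E → Fin r → K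
  let b : Basis (Fin n) K E := Module.finBasisOfFinrankEq K E hE
  let p : E →ₗ[K] (Fin r → K) :=
    (LinearMap.funLeft K K (Fin.castLE hrn.le)) ∘ₗ (b.equivFun : E ≃ₗ[K] (Fin n → K)).toLinearMap
  have hp : Function.Surjective p := by
    have h1 : Function.Surjective (LinearMap.funLeft K K (Fin.castLE hrn.le) :
        (Fin n → K) →ₗ[K] (Fin r → K)) :=
      LinearMap.funLeft_surjective_of_injective K K _ (Fin.castLE_injective hrn.le)
    exact h1.comp b.equivFun.surjective
  have hFr : finrank K (Fin r → K) = r := by simp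
  have hsq : n * n = n ^ 2 := by ring
  have hrsq : r * r = r ^ 2 := by ring
  have hnrsq : r ^ 2 ≤ n ^ 2 := Nat.pow_le_pow_left hrn.le 2
  have hnr2 : n * r ≤ n ^ 2 := by
    calc n * r ≤ n * n := Nat.mul_le_mul_left n hrn.le
    _ = n ^ 2 := hsq
  have hEE : finrank K (E ⊗[K] E) = n ^ 2 := by
    rw [Module.finrank_tensorProduct, hE, hsq]
  have hMdim : finrank K (LinearMap.ker (TensorProduct.map p p)) = n ^ 2 - r ^ 2 := by
    have h := LinearMap.finrank_range_add_finrank_ker (TensorProduct.map p p)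
    rw [LinearMap.range_eq_top.2 (TensorProduct.map_surjective hp hp)] at h
    rw [finrank_top, Module.finrank_tensorProduct, Module.finrank_tensorProduct,
      hFr, hE, hsq, hrsq] at h
    omega
  have hX₁dim : finrank K (LinearMap.ker (LinearMap.lTensor E p)) + n * r = n ^ 2 := by
    have h := LinearMap.finrank_range_add_finrank_ker (LinearMap.lTensor E p)
    rw [LinearMap.range_eq_top.2 (LinearMap.lTensor_surjective E hp)] at h
    rw [finrank_top, Module.finrank_tensorProduct, Module.finrank_tensorProduct,
      hFr, hE, hsq] at h
    omega
  have hX₂dim : finrank K (LinearMap.ker (LinearMap.rTensor E p)) + n * r = n ^ 2 := by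
    have h := LinearMap.finrank_range_add_finrank_ker (LinearMap.rTensor E p)
    rw [LinearMap.range_eq_top.2 (LinearMap.rTensor_surjective E hp)] at h
    rw [finrank_top, Module.finrank_tensorProduct, Module.finrank_tensorProduct,
      hFr, hE, hsq, show r * n = n * r from Nat.mul_comm r n] at h
    omega
  -- arithmetic: d ≤ n * r
  have hd_le : n ^ 2 - r ^ 2 ≤ n * r := by
    have h2 : n ^ 2 - r ^ 2 + r ^ 2 = n ^ 2 := by omega
    have h4 : n ^ 2 * (n ^ 2 - r ^ 2) + n ^ 2 * r ^ 2 = n ^ 4 := by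
      rw [← Nat.mul_add, h2]; ring
    have hsq2 : (n ^ 2 - r ^ 2) ^ 2 ≤ (n * r) ^ 2 := by
      have h5 : (n * r) ^ 2 = n ^ 2 * r ^ 2 := by ring
      rw [h5]; omega
    by_contra hcon
    push_neg at hcon
    exact absurd hsq2 (not_le.2 (Nat.pow_lt_pow_left hcon (by norm_num)))
  -- choose L avoiding the two kernels
  obtain ⟨L, hLdim, hLX₁, hLX₂⟩ :=
    exists_avoiding (n ^ 2 - r ^ 2) (LinearMap.ker (LinearMap.lTensor E p))
      (LinearMap.ker (LinearMap.rTensor E p)) (by rw [hEE]; omega) (by rw [hEE]; omega)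
  refine ⟨L, LinearMap.ker (TensorProduct.map p p), hLdim, hMdim, ?_⟩
  have hfinj : Function.Injective ((LinearMap.lTensor E p) ∘ₗ L.subtype) :=
    injective_comp_subtype _ (LinearMap.lTensor E p) L hLX₁
  have hginj : Function.Injective ((LinearMap.rTensor E p) ∘ₗ L.subtype) :=
    injective_comp_subtype _ (LinearMap.rTensor E p) L hLX₂
  have hmapinj := map_injective _ _ hfinj hginj
  rw [eq_bot_iff]
  intro x hx
  obtain ⟨hx1, hx2⟩ := Submodule.mem_inf.mp hx
  have hΨx : Psi p x = 0 := Psi_midSub4 p x hx2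
  rw [GS.tsub4, Submodule.mem_map] at hx1
  obtain ⟨y, hy, rfl⟩ := hx1
  rw [GS.tsub, LinearMap.mem_range] at hy
  obtain ⟨t, rfl⟩ := hy
  rw [LinearEquiv.coe_coe, Psi_pow4] at hΨx
  have hcomp : Theta p (TensorProduct.map L.subtype L.subtype t) =
      (TensorProduct.map ((LinearMap.lTensor E p) ∘ₗ L.subtype)
        ((LinearMap.rTensor E p) ∘ₗ L.subtype)) t := by
    rw [TensorProduct.map_comp, Theta, LinearMap.comp_apply]
  rw [hcomp] at hΨx
  have ht0 : t = 0 := hmapinj (by rw [hΨx, map_zero])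
  rw [ht0]
  simp only [map_zero, Submodule.zero_mem]

end GSProof

/-- Let `E` be an `n`-dimensional `K`-vector space, `1 ≤ r < n`,
`d = n² − r²` and `d² + n²d ≤ n⁴`. Then there exist subspaces `L, M ⊆ E ⊗ E` with
`dim L = dim M = d` such that `(L ⊗ L) ∩ (E ⊗ M ⊗ E) = {0}` in `E^{⊗4}`. -/
theorem exists_L_M_inter_eq_bot (K : Type*) [Field K] (E : Type*) [AddCommGroup E] [Module K E]
    (n r : ℕ) (hE : Module.finrank K E = n) (hr1 : 1 ≤ r) (hrn : r < n)
    (hd : (n ^ 2 - r ^ 2) ^ 2 + n ^ 2 * (n ^ 2 - r ^ 2) ≤ n ^ 4) :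
    ∃ L M : Submodule K (E ⊗[K] E),
      Module.finrank K L = n ^ 2 - r ^ 2 ∧ Module.finrank K M = n ^ 2 - r ^ 2 ∧
      GS.tsub4 K E L L ⊓ GS.midSub4 K E M = ⊥ :=
  GSProof.main K E n r hE hr1 hrn hd
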